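/- Let G be a loopless multigraph with maximum degree at most 3 that is not incidence 6-choosable, and suppose that every loopless multigraph with maximum degree at most 3 having fewer vertices than G is incidence 6-choosable. Then G is cubic (every vertex has degree exactly 3) and G has no multiple edges (it is a simple graph). -/

import Mathlib

/-- A loopless multigraph: a vertex type `V`, an edge type `E`, and a map assigning to each
edge its pair of (distinct) endpoints. -/
structure Multigraph (V E : Type*) where
  ends : E → Sym2 V
  loopless : ∀ e, ¬ (ends e).IsDiag

namespace Multigraph

variable {V E : Type*}

/-- The degree of a vertex: the number of edges incident with it. -/
noncomputable def degree (G : Multigraph V E) (v : V) : ℕ := {e : E | v ∈ G.ends e}.ncard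

/-- `(v, e)` is an incidence of `G` when `v` is an endpoint of `e`. -/
def IsInc (G : Multigraph V E) (v : V) (e : E) : Prop := v ∈ G.ends e

/-- Two incidences `(v, e)` and `(w, f)` are adjacent if `v = w`, or `e = f`, or the edge `e`
joins `v` and `w`, or the edge `f` joins `v` and `w`. -/
def IncAdj (G : Multigraph V E) (v : V) (e : E) (w : V) (f : E) : Prop :=
  v = w ∨ e = f ∨ G.ends e = s(v, w) ∨ G.ends f = s(v, w)

/-- `φ` is an incidence coloring of `G` choosing colors from the list assignment `L`. -/
def IsIncListColoring (G : Multigraph V E) (L : V × E → Finset ℕ) (φ : V × E → ℕ) : Prop :=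
  (∀ v e, G.IsInc v e → φ (v, e) ∈ L (v, e)) ∧
  (∀ v e w f, G.IsInc v e → G.IsInc w f → (v, e) ≠ (w, f) → G.IncAdj v e w f →
    φ (v, e) ≠ φ (w, f))

/-- `G` is incidence `k`-choosable: for every assignment of lists of `k` colors to the
incidences of `G` there is an incidence coloring choosing colors from the lists. -/
def IncChoosable (G : Multigraph V E) (k : ℕ) : Prop :=
  ∀ L : V × E → Finset ℕ, (∀ v e, G.IsInc v e → (L (v, e)).card = k) →
    ∃ φ, G.IsIncListColoring L φ

/-- The incidence choice number of `G`: the least `k` such that `G` is incidence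
`k`-choosable. -/
noncomputable def incChoiceNumber (G : Multigraph V E) : ℕ := sInf {k | G.IncChoosable k}

end Multigraph


open Multigraph

section Helpers

variable {V E : Type*}

lemma Multigraph.incAdj_symm (G : Multigraph V E) {v w : V} {e f : E}
    (h : G.IncAdj v e w f) : G.IncAdj w f v e := by
  rcases h with h | h | h | h
  · exact Or.inl h.symm
  · exact Or.inr (Or.inl h.symm)
  · exact Or.inr (Or.inr (Or.inr (h.trans (Sym2.eq_swap))))
  · exact Or.inr (Or.inr (Or.inl (h.trans (Sym2.eq_swap))))

lemma sym2_exists (s : Sym2 V) : ∃ a b : V, s = s(a, b) := by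
  induction s using Sym2.ind with
  | _ a b => exact ⟨a, b, rfl⟩

/-- endpoints of an edge -/
lemma Multigraph.exists_ends (G : Multigraph V E) (e : E) :
    ∃ a b : V, a ≠ b ∧ G.ends e = s(a, b) := by
  obtain ⟨a, b, hab⟩ := sym2_exists (G.ends e)
  refine ⟨a, b, ?_, hab⟩
  intro h; exact G.loopless e (by rw [hab, h]; exact Sym2.mk_isDiag_iff.2 rfl)

/-- choose one color avoiding a small forbidden set -/
lemma exists_color {L F : Finset ℕ} (hL : 6 ≤ L.card) (hF : F.card ≤ 5) :
    ∃ c, c ∈ L ∧ c ∉ F := by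
  have h : 0 < (L \ F).card := lt_of_lt_of_le (by omega) (Finset.le_card_sdiff F L)
  obtain ⟨c, hc⟩ := Finset.card_pos.mp h
  rw [Finset.mem_sdiff] at hc
  exact ⟨c, hc.1, hc.2⟩

lemma trick {A B M : Finset ℕ} (hA : 3 ≤ A.card) (hB : 3 ≤ B.card) (hM : 5 ≤ M.card) :
    ∃ ca ∈ A, ∃ cb ∈ B, 4 ≤ (M \ {ca, cb}).card := by
  have hcard : ∀ ca cb : ℕ, ({ca, cb} : Finset ℕ).card ≤ 2 := by
    intro ca cb
    exact (Finset.card_insert_le _ _).trans (by simp)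
  by_cases hAB : (A ∩ B).Nonempty
  · obtain ⟨x, hx⟩ := hAB
    rw [Finset.mem_inter] at hx
    refine ⟨x, hx.1, x, hx.2, ?_⟩
    have : ({x, x} : Finset ℕ).card ≤ 1 := by simp
    have := Finset.le_card_sdiff ({x, x} : Finset ℕ) M
    omega
  · obtain ⟨a0, ha0⟩ : A.Nonempty := Finset.card_pos.mp (by omega)
    obtain ⟨b0, hb0⟩ : B.Nonempty := Finset.card_pos.mp (by omega)
    by_cases hAM : (A \ M).Nonempty
    · obtain ⟨x, hx⟩ := hAM
      rw [Finset.mem_sdiff] at hx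
      refine ⟨x, hx.1, b0, hb0, ?_⟩
      have h1 : M \ {x, b0} = M \ {b0} := by
        ext y; simp only [Finset.mem_sdiff, Finset.mem_insert, Finset.mem_singleton]
        constructor
        · rintro ⟨h, h2⟩; exact ⟨h, fun hy => h2 (Or.inr hy)⟩
        · rintro ⟨h, h2⟩
          refine ⟨h, ?_⟩; rintro (rfl | hy); exact hx.2 h; exact h2 hy
      rw [h1]
      have : ({b0} : Finset ℕ).card = 1 := by simp
      have := Finset.le_card_sdiff ({b0} : Finset ℕ) M
      omega
    · by_cases hBM : (B \ M).Nonempty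
      · obtain ⟨x, hx⟩ := hBM
        rw [Finset.mem_sdiff] at hx
        refine ⟨a0, ha0, x, hx.1, ?_⟩
        have h1 : M \ {a0, x} = M \ {a0} := by
          ext y; simp only [Finset.mem_sdiff, Finset.mem_insert, Finset.mem_singleton]
          constructor
          · rintro ⟨h, h2⟩; exact ⟨h, fun hy => h2 (Or.inl hy)⟩
          · rintro ⟨h, h2⟩
            refine ⟨h, ?_⟩; rintro (hy | rfl); exact h2 hy; exact hx.2 h
        rw [h1]
        have : ({a0} : Finset ℕ).card = 1 := by simp
        have := Finset.le_card_sdiff ({a0} : Finset ℕ) M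
        omega
      · -- A, B ⊆ M and disjoint, so M has at least 6 elements
        have hAsub : A ⊆ M := fun x hx => by
          by_contra h; exact hAM ⟨x, Finset.mem_sdiff.2 ⟨hx, h⟩⟩
        have hBsub : B ⊆ M := fun x hx => by
          by_contra h; exact hBM ⟨x, Finset.mem_sdiff.2 ⟨hx, h⟩⟩
        have hdisj : Disjoint A B := by
          rw [Finset.disjoint_iff_inter_eq_empty]
          exact Finset.not_nonempty_iff_eq_empty.mp hAB
        have hABM : A ∪ B ⊆ M := Finset.union_subset hAsub hBsub
        have h6 : 6 ≤ M.card := by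
          have := Finset.card_le_card hABM
          rw [Finset.card_union_of_disjoint hdisj] at this
          omega
        refine ⟨a0, ha0, b0, hb0, ?_⟩
        have := Finset.le_card_sdiff ({a0, b0} : Finset ℕ) M
        have := hcard a0 b0
        omega

end Helpers

section Extend

variable {V E : Type*}

open Classical in
/-- Apply a list of (incidence, color) updates to a base coloring. -/
noncomputable def extFun (ψ : V × E → ℕ) (l : List ((V × E) × ℕ)) : V × E → ℕ :=
  l.foldr (fun pc g q => if q = pc.1 then pc.2 else g q) ψ

lemma extFun_nil (ψ : V × E → ℕ) : extFun ψ [] = ψ := rfl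

lemma extFun_not_mem {ψ : V × E → ℕ} {l : List ((V × E) × ℕ)} {q : V × E}
    (h : q ∉ l.map Prod.fst) : extFun ψ l q = ψ q := by
  induction l with
  | nil => rfl
  | cons pc rest ih =>
    simp only [List.map_cons, List.mem_cons, not_or] at h
    simp only [extFun, List.foldr_cons]
    rw [if_neg (by exact fun hq => h.1 (hq ▸ rfl))]
    exact ih h.2

lemma extFun_mem {ψ : V × E → ℕ} {l : List ((V × E) × ℕ)} {pc : (V × E) × ℕ}
    (hnd : (l.map Prod.fst).Nodup) (h : pc ∈ l) : extFun ψ l pc.1 = pc.2 := by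
  induction l with
  | nil => simp at h
  | cons hd rest ih =>
    simp only [List.map_cons, List.nodup_cons] at hnd
    rcases List.mem_cons.mp h with rfl | h
    · simp [extFun]
    · have hne : pc.1 ≠ hd.1 := by
        intro hq
        exact hnd.1 (hq ▸ (List.mem_map.2 ⟨pc, h, rfl⟩))
      simp only [extFun, List.foldr_cons]
      rw [if_neg hne]
      exact ih hnd.2 h

/-- Generic extension lemma: a partial proper coloring on "old" incidences extended by an
explicit list of new incidence-color pairs is an incidence list coloring. -/
lemma extend_coloring (G : Multigraph V E) (L : V × E → Finset ℕ) (ψ : V × E → ℕ)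
    (Old : V × E → Prop) (l : List ((V × E) × ℕ))
    (hOldL : ∀ q : V × E, G.IsInc q.1 q.2 → Old q → ψ q ∈ L q)
    (holdold : ∀ p q : V × E, G.IsInc p.1 p.2 → G.IsInc q.1 q.2 → Old p → Old q →
      p ≠ q → G.IncAdj p.1 p.2 q.1 q.2 → ψ p ≠ ψ q)
    (hkeys : ∀ pc ∈ l, ¬ Old pc.1 ∧ G.IsInc pc.1.1 pc.1.2 ∧ pc.2 ∈ L pc.1)
    (hcover : ∀ q : V × E, G.IsInc q.1 q.2 → ¬ Old q → q ∈ l.map Prod.fst)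
    (hnodup : (l.map Prod.fst).Nodup)
    (hnewold : ∀ pc ∈ l, ∀ q : V × E, G.IsInc q.1 q.2 → Old q →
      G.IncAdj pc.1.1 pc.1.2 q.1 q.2 → pc.2 ≠ ψ q)
    (hnewnew : l.Pairwise (fun pc qd => G.IncAdj pc.1.1 pc.1.2 qd.1.1 qd.1.2 → pc.2 ≠ qd.2)) :
    G.IsIncListColoring L (extFun ψ l) := by
  have key : ∀ q : V × E, G.IsInc q.1 q.2 →
      (Old q ∧ extFun ψ l q = ψ q) ∨ (∃ pc ∈ l, pc.1 = q ∧ extFun ψ l q = pc.2) := by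
    intro q hq
    by_cases hOld : Old q
    · left
      refine ⟨hOld, extFun_not_mem ?_⟩
      intro hmem
      obtain ⟨pc, hpc, hpcq⟩ := List.mem_map.mp hmem
      exact (hkeys pc hpc).1 (hpcq ▸ hOld)
    · right
      obtain ⟨pc, hpc, hpcq⟩ := List.mem_map.mp (hcover q hq hOld)
      exact ⟨pc, hpc, hpcq, hpcq ▸ extFun_mem hnodup hpc⟩
  have hsym : Symmetric (fun pc qd : (V × E) × ℕ =>
      G.IncAdj pc.1.1 pc.1.2 qd.1.1 qd.1.2 → pc.2 ≠ qd.2) := by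
    intro pc qd h hadj
    exact fun he => (h (G.incAdj_symm hadj)) he.symm
  constructor
  · intro v e hve
    rcases key (v, e) hve with ⟨hOld, heq⟩ | ⟨pc, hpc, hpcq, heq⟩
    · rw [heq]; exact hOldL _ hve hOld
    · rw [heq]; exact hpcq ▸ (hkeys pc hpc).2.2
  · intro v e w f hve hwf hne hadj
    rcases key (v, e) hve with ⟨hOld1, heq1⟩ | ⟨pc, hpc, hpcq, heq1⟩ <;>
      rcases key (w, f) hwf with ⟨hOld2, heq2⟩ | ⟨qd, hqd, hqdq, heq2⟩
    · rw [heq1, heq2]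
      exact holdold _ _ hve hwf hOld1 hOld2 hne hadj
    · rw [heq1, heq2]
      intro h
      exact hnewold qd hqd (v, e) hve hOld1 (G.incAdj_symm (hqdq ▸ hadj)) h.symm
    · rw [heq1, heq2]
      exact hnewold pc hpc (w, f) hwf hOld2 (hpcq ▸ hadj)
    · rw [heq1, heq2]
      have hpcqd : pc ≠ qd := by
        intro h
        exact hne (hpcq ▸ hqdq ▸ h ▸ rfl)
      exact (@List.Pairwise.forall _ _ _ ⟨hsym⟩ hnewnew _ hpc _ hqd hpcqd) (hpcq ▸ hqdq ▸ hadj)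

end Extend

section Delete

/-- Deleting a nonempty set of vertices from a minimal counterexample: there is a proper
list coloring of all incidences whose edge avoids `W`. -/
lemma delete_choosable {V E : Type} [Fintype V] [Fintype E] (G : Multigraph V E)
    (hdeg : ∀ v, G.degree v ≤ 3)
    (hmin : ∀ (V' E' : Type) [Fintype V'] [Fintype E'] (G' : Multigraph V' E'),
      (∀ v, G'.degree v ≤ 3) → Fintype.card V' < Fintype.card V → G'.IncChoosable 6)
    (W : Set V) (hW : W.Nonempty) (L : V × E → Finset ℕ)
    (hL : ∀ v e, G.IsInc v e → (L (v, e)).card = 6) :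
    ∃ ψ : V × E → ℕ,
      (∀ x t, G.IsInc x t → (∀ y ∈ G.ends t, y ∉ W) → ψ (x, t) ∈ L (x, t)) ∧
      (∀ x t y s, G.IsInc x t → G.IsInc y s → (∀ z ∈ G.ends t, z ∉ W) →
        (∀ z ∈ G.ends s, z ∉ W) → (x, t) ≠ (y, s) → G.IncAdj x t y s →
        ψ (x, t) ≠ ψ (y, s)) := by
  classical
  choose a b hne hends using G.exists_ends
  have hmema : ∀ t : E, a t ∈ G.ends t := fun t => by rw [hends t]; exact Sym2.mem_mk_left _ _
  have hmemb : ∀ t : E, b t ∈ G.ends t := fun t => by rw [hends t]; exact Sym2.mem_mk_right _ _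
  have pa : ∀ t : {t : E // ∀ y ∈ G.ends t, y ∉ W}, a t.1 ∉ W := fun t => t.2 _ (hmema t.1)
  have pb : ∀ t : {t : E // ∀ y ∈ G.ends t, y ∉ W}, b t.1 ∉ W := fun t => t.2 _ (hmemb t.1)
  let G' : Multigraph {x : V // x ∉ W} {t : E // ∀ y ∈ G.ends t, y ∉ W} :=
    ⟨fun t => s(⟨a t.1, pa t⟩, ⟨b t.1, pb t⟩), by
      intro t h
      rw [Sym2.mk_isDiag_iff, Subtype.ext_iff] at h
      exact hne t.1 h⟩
  have hge : ∀ t, G'.ends t = s(⟨a t.1, pa t⟩, ⟨b t.1, pb t⟩) := fun t => rfl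
  have hmem : ∀ (x : {x : V // x ∉ W}) (t : {t : E // ∀ y ∈ G.ends t, y ∉ W}),
      x ∈ G'.ends t ↔ x.1 ∈ G.ends t.1 := by
    intro x t
    rw [hge, Sym2.mem_iff, hends t.1, Sym2.mem_iff]
    constructor
    · rintro (rfl | rfl)
      · exact Or.inl rfl
      · exact Or.inr rfl
    · rintro (h | h)
      · exact Or.inl (Subtype.ext h)
      · exact Or.inr (Subtype.ext h)
  have hendseq : ∀ (x y : {x : V // x ∉ W}) (t : {t : E // ∀ y ∈ G.ends t, y ∉ W}),
      G.ends t.1 = s(x.1, y.1) → G'.ends t = s(x, y) := by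
    intro x y t h
    rw [hends t.1, Sym2.eq_iff] at h
    rw [hge, Sym2.eq_iff]
    rcases h with ⟨h1, h2⟩ | ⟨h1, h2⟩
    · exact Or.inl ⟨Subtype.ext h1, Subtype.ext h2⟩
    · exact Or.inr ⟨Subtype.ext h1, Subtype.ext h2⟩
  have hdeg' : ∀ x, G'.degree x ≤ 3 := by
    intro x
    refine le_trans (Set.ncard_le_ncard_of_injOn (fun t => t.1)
      (fun t ht => (hmem x t).mp ht) (fun s _ t _ h => Subtype.ext h)
      (Set.toFinite _)) (hdeg x.1)
  haveI : Fintype {x : V // x ∉ W} := Fintype.ofFinite _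
  haveI : Fintype {t : E // ∀ y ∈ G.ends t, y ∉ W} := Fintype.ofFinite _
  obtain ⟨w0, hw0⟩ := hW
  have hcard : Fintype.card {x : V // x ∉ W} < Fintype.card V := by
    apply Fintype.card_lt_of_injective_of_notMem (fun x : {x : V // x ∉ W} => x.1)
      Subtype.val_injective (b := w0)
    rintro ⟨x, rfl⟩
    exact x.2 hw0
  obtain ⟨φ', hφ'⟩ := hmin _ _ G' hdeg' hcard (fun p => L (p.1.1, p.2.1))
    (by
      intro x t hxt
      exact hL x.1 t.1 ((hmem x t).mp hxt))
  set ψ : V × E → ℕ := fun p => if h : (∀ y ∈ G.ends p.2, y ∉ W) ∧ p.1 ∉ W then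
    φ' (⟨p.1, h.2⟩, ⟨p.2, h.1⟩) else 0 with hψ
  refine ⟨ψ, ?_, ?_⟩
  · intro x t hxt hold
    simp only [hψ]
    rw [dif_pos (⟨hold, hold x hxt⟩ : (∀ y ∈ G.ends t, y ∉ W) ∧ x ∉ W)]
    exact hφ'.1 ⟨x, hold x hxt⟩ ⟨t, hold⟩ ((hmem ⟨x, hold x hxt⟩ ⟨t, hold⟩).mpr hxt)
  · intro x t y s hxt hys holdt holds hne2 hadj
    simp only [hψ]
    rw [dif_pos (⟨holdt, holdt x hxt⟩ : (∀ y ∈ G.ends t, y ∉ W) ∧ x ∉ W),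
      dif_pos (⟨holds, holds y hys⟩ : (∀ z ∈ G.ends s, z ∉ W) ∧ y ∉ W)]
    apply hφ'.2 ⟨x, holdt x hxt⟩ ⟨t, holdt⟩ ⟨y, holds y hys⟩ ⟨s, holds⟩
      ((hmem ⟨x, holdt x hxt⟩ ⟨t, holdt⟩).mpr hxt)
      ((hmem ⟨y, holds y hys⟩ ⟨s, holds⟩).mpr hys)
    · intro h
      apply hne2
      rw [Prod.ext_iff] at h ⊢
      exact ⟨congrArg Subtype.val h.1, congrArg Subtype.val h.2⟩
    · rcases hadj with h | h | h | h
      · exact Or.inl (Subtype.ext h)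
      · exact Or.inr (Or.inl (Subtype.ext h))
      · exact Or.inr (Or.inr (Or.inl (hendseq _ _ _ h)))
      · exact Or.inr (Or.inr (Or.inr (hendseq _ _ _ h)))

end Delete

section Finsets

variable {V E : Type*}

open Classical in
/-- The finset of edges incident with `v`. -/
noncomputable def Multigraph.edgesAt (G : Multigraph V E) [Fintype E] (v : V) : Finset E :=
  Finset.univ.filter (fun t => v ∈ G.ends t)

lemma Multigraph.mem_edgesAt [Fintype E] {G : Multigraph V E} {v : V} {t : E} :
    t ∈ G.edgesAt v ↔ v ∈ G.ends t := by
  classical simp [Multigraph.edgesAt]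

lemma Multigraph.degree_eq [Fintype E] (G : Multigraph V E) (v : V) :
    G.degree v = (G.edgesAt v).card := by
  rw [Multigraph.degree,
    show {e | v ∈ G.ends e} = (↑(G.edgesAt v) : Set E) by
      ext t; simp [Multigraph.mem_edgesAt]]
  exact Set.ncard_coe_finset _

open Classical in
/-- The finset of endpoints of `t`. -/
noncomputable def Multigraph.endsF (G : Multigraph V E) [Fintype V] (t : E) : Finset V :=
  Finset.univ.filter (fun x => x ∈ G.ends t)

lemma Multigraph.mem_endsF [Fintype V] {G : Multigraph V E} {x : V} {t : E} :
    x ∈ G.endsF t ↔ x ∈ G.ends t := by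
  classical simp [Multigraph.endsF]

lemma Multigraph.endsF_card [Fintype V] (G : Multigraph V E) (t : E) :
    (G.endsF t).card ≤ 2 := by
  classical
  obtain ⟨a, b, -, h⟩ := G.exists_ends t
  refine le_trans (Finset.card_le_card (fun x hx => ?_)) (le_trans
    (Finset.card_insert_le a {b}) (by simp))
  rw [Multigraph.mem_endsF, h, Sym2.mem_iff] at hx
  simpa using hx

lemma Multigraph.other_end (G : Multigraph V E) {e : E} {v : V} (h : v ∈ G.ends e) :
    ∃ u, u ≠ v ∧ G.ends e = s(v, u) := by
  obtain ⟨a, b, hab, hends⟩ := G.exists_ends e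
  rw [hends, Sym2.mem_iff] at h
  rcases h with rfl | rfl
  · exact ⟨b, fun hh => hab hh.symm, hends⟩
  · exact ⟨a, hab, hends.trans Sym2.eq_swap⟩

end Finsets

open Classical in
lemma card_le_two_of {V E : Type*} (G : Multigraph V E) [Fintype E]
    (hdeg : ∀ x, G.degree x ≤ 3) {u v : V} {e : E}
    (hue : u ∈ G.ends e) (hve : v ∈ G.ends e) (P : Finset E)
    (hP : ∀ t ∈ P, u ∈ G.ends t ∧ v ∉ G.ends t) : P.card ≤ 2 := by
  have hsub : P ⊆ (G.edgesAt u).erase e := by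
    intro t ht
    refine Finset.mem_erase.mpr ⟨?_, Multigraph.mem_edgesAt.mpr (hP t ht).1⟩
    intro h
    exact (hP t ht).2 (h ▸ hve)
  have h2 : (G.edgesAt u).card ≤ 3 := by
    have := hdeg u
    rwa [G.degree_eq u] at this
  have h3 : e ∈ G.edgesAt u := Multigraph.mem_edgesAt.mpr hue
  have := Finset.card_le_card hsub
  rw [Finset.card_erase_of_mem h3] at this
  omega


/-- A minimum counterexample to "every subcubic loopless multigraph is incidence 6-choosable"
is cubic and has no multiple edges: if `G` is a loopless multigraph with maximum degree at
most 3 that is not incidence 6-choosable, while every loopless multigraph with maximum degree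
at most 3 on fewer vertices is incidence 6-choosable, then every vertex of `G` has degree
exactly 3 and no two distinct edges of `G` have the same pair of endpoints. -/
theorem min_counterexample_is_cubic_and_simple {V E : Type} [Fintype V] [Fintype E]
    (G : Multigraph V E) (hdeg : ∀ v, G.degree v ≤ 3)
    (hnot : ¬ G.IncChoosable 6)
    (hmin : ∀ (V' E' : Type) [Fintype V'] [Fintype E'] (G' : Multigraph V' E'),
      (∀ v, G'.degree v ≤ 3) → Fintype.card V' < Fintype.card V → G'.IncChoosable 6) :
    (∀ v, G.degree v = 3) ∧ (∀ e f : E, G.ends e = G.ends f → e = f) := by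
  classical
  have hdeg3 : ∀ v, G.degree v = 3 := by
    intro v
    by_contra hv3
    have hv2 : (G.edgesAt v).card ≤ 2 := by
      have h1 := hdeg v
      rw [G.degree_eq v] at h1 hv3
      omega
    apply hnot
    intro L hL
    obtain ⟨ψ, hψL, hψP⟩ := delete_choosable G hdeg hmin {v} ⟨v, rfl⟩ L hL
    set Old : V × E → Prop := fun q => ∀ z ∈ G.ends q.2, z ∉ ({v} : Set V) with hOldDef
    have hOldIff : ∀ s : E, (∀ z ∈ G.ends s, z ∉ ({v} : Set V)) ↔ v ∉ G.ends s := by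
      intro s
      constructor
      · exact fun h hv => h v hv rfl
      · intro h z hz hzv
        rw [Set.mem_singleton_iff] at hzv
        exact h (hzv ▸ hz)
    have hOldL : ∀ q : V × E, G.IsInc q.1 q.2 → Old q → ψ q ∈ L q := fun q h1 h2 =>
      hψL q.1 q.2 h1 h2
    have holdold : ∀ p q : V × E, G.IsInc p.1 p.2 → G.IsInc q.1 q.2 → Old p → Old q →
        p ≠ q → G.IncAdj p.1 p.2 q.1 q.2 → ψ p ≠ ψ q := by
      intro p q h1 h2 h3 h4 h5 h6
      have := hψP p.1 p.2 q.1 q.2 h1 h2 h3 h4 (by simpa using h5) h6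
      simpa using this
    -- forbidden color finsets
    have hIncCard : ∀ x t, G.IsInc x t → 6 ≤ (L (x, t)).card := fun x t h =>
      le_of_eq (hL x t h).symm
    -- the three subcases on the number of edges at v
    interval_cases hcard : (G.edgesAt v).card
    · -- degree 0
      refine ⟨extFun ψ [], extend_coloring G L ψ Old [] hOldL holdold (by simp) ?_
        (by simp) (by simp) (by simp)⟩
      intro q hq hOldq
      exfalso
      apply hOldq
      rw [hOldDef]
      simp only
      rw [hOldIff]
      intro hv
      have : q.2 ∈ G.edgesAt v := Multigraph.mem_edgesAt.mpr hv
      rw [Finset.card_eq_zero.mp hcard] at this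
      simp at this
    · -- degree 1
      obtain ⟨e, he⟩ := Finset.card_eq_one.mp hcard
      have hve : v ∈ G.ends e := Multigraph.mem_edgesAt.mp (he ▸ Finset.mem_singleton_self e)
      obtain ⟨u, huv, hendse⟩ := G.other_end hve
      have hue : u ∈ G.ends e := by rw [hendse]; exact Sym2.mem_mk_right _ _
      have hnotv : ∀ t, v ∈ G.ends t → t = e := by
        intro t ht
        have : t ∈ G.edgesAt v := Multigraph.mem_edgesAt.mpr ht
        rwa [he, Finset.mem_singleton] at this
      set F1 : Finset ℕ := (Finset.univ.filter
          (fun t => u ∈ G.ends t ∧ v ∉ G.ends t)).biUnion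
          (fun t => (G.endsF t).image (fun x => ψ (x, t))) with hF1
      have hF1card : F1.card ≤ 4 := by
        refine le_trans (Finset.card_biUnion_le_card_mul _ _ 2 (fun t _ =>
          le_trans (Finset.card_image_le) (G.endsF_card t))) ?_
        have hsub : (Finset.univ.filter (fun t => u ∈ G.ends t ∧ v ∉ G.ends t)) ⊆
            (G.edgesAt u).erase e := by
          intro t ht
          simp only [Finset.mem_filter] at ht
          refine Finset.mem_erase.mpr ⟨?_, Multigraph.mem_edgesAt.mpr ht.2.1⟩
          intro h
          exact ht.2.2 (h ▸ hve)
        have h1 : ((G.edgesAt u).erase e).card ≤ 2 := by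
          have h2 : (G.edgesAt u).card ≤ 3 := by
            have := hdeg u
            rwa [G.degree_eq u] at this
          have := Finset.card_erase_le (s := G.edgesAt u) (a := e)
          have h3 : e ∈ G.edgesAt u := Multigraph.mem_edgesAt.mpr hue
          rw [Finset.card_erase_of_mem h3]
          omega
        have := Finset.card_le_card hsub
        omega
      obtain ⟨c1, hc1L, hc1F⟩ := exists_color (F := F1) (hIncCard u e hue) (by omega)
      set F2 : Finset ℕ := ((Finset.univ.filter
          (fun t => u ∈ G.ends t ∧ v ∉ G.ends t)).image (fun t => ψ (u, t))) ∪ {c1} with hF2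
      have hF2card : F2.card ≤ 3 := by
        refine le_trans (Finset.card_union_le _ _) ?_
        have h1 : ((Finset.univ.filter (fun t => u ∈ G.ends t ∧ v ∉ G.ends t)).image
            (fun t => ψ (u, t))).card ≤ 2 := by
          refine le_trans Finset.card_image_le ?_
          have hsub : (Finset.univ.filter (fun t => u ∈ G.ends t ∧ v ∉ G.ends t)) ⊆
              (G.edgesAt u).erase e := by
            intro t ht
            simp only [Finset.mem_filter] at ht
            refine Finset.mem_erase.mpr ⟨?_, Multigraph.mem_edgesAt.mpr ht.2.1⟩
            intro h
            exact ht.2.2 (h ▸ hve)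
          have h2 : (G.edgesAt u).card ≤ 3 := by
            have := hdeg u
            rwa [G.degree_eq u] at this
          have h3 : e ∈ G.edgesAt u := Multigraph.mem_edgesAt.mpr hue
          have := Finset.card_le_card hsub
          rw [Finset.card_erase_of_mem h3] at this
          omega
        simp only [Finset.card_singleton]
        omega
      obtain ⟨c2, hc2L, hc2F⟩ := exists_color (F := F2) (hIncCard v e hve) (by omega)
      have hnOlde : ¬ Old (u, e) := by
        rw [hOldDef]; simp only; rw [hOldIff]; simp [hve]
      have hnOldve : ¬ Old (v, e) := by
        rw [hOldDef]; simp only; rw [hOldIff]; simp [hve]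
      refine ⟨_, extend_coloring G L ψ Old [((u, e), c1), ((v, e), c2)] hOldL holdold
        ?_ ?_ ?_ ?_ ?_⟩
      · rintro pc hpc
        rcases List.mem_pair.mp hpc with rfl | rfl
        · exact ⟨hnOlde, hue, hc1L⟩
        · exact ⟨hnOldve, hve, hc2L⟩
      · -- cover
        rintro ⟨x, t⟩ hinc hOldq
        have hvt : v ∈ G.ends t := by
          by_contra h
          exact hOldq ((hOldIff t).mpr h)
        have ht : t = e := hnotv t hvt
        have hxe : x ∈ G.ends e := ht ▸ hinc
        rw [hendse, Sym2.mem_iff] at hxe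
        rcases hxe with rfl | rfl <;> simp [ht]
      · show ([(u, e), (v, e)] : List (V × E)).Nodup
        refine List.nodup_cons.mpr ⟨?_, List.nodup_singleton _⟩
        simp only [List.mem_singleton]
        intro h
        exact huv (congrArg Prod.fst h)
      · -- new-old
        rintro pc hpc ⟨y, s⟩ hinc hOldq hadj
        have hvs : v ∉ G.ends s := (hOldIff s).mp hOldq
        have hse : s ≠ e := fun h => hvs (h ▸ hve)
        rcases List.mem_pair.mp hpc with rfl | rfl
        · -- (u, e) vs old: forbidden by F1
          dsimp only at hadj ⊢
          intro hcontra
          apply hc1F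
          rw [hF1]
          have hkey : u ∈ G.ends s ∧ y ∈ G.ends s := by
            rcases hadj with h | h | h | h
            · exact ⟨by rw [h]; exact hinc, hinc⟩
            · exact absurd (by rw [h] at hve; exact hve) hvs
            · exfalso
              rw [hendse, Sym2.eq_iff] at h
              rcases h with ⟨h1, -⟩ | ⟨h1, -⟩
              · exact huv h1.symm
              · exact hvs (by rw [h1]; exact hinc)
            · have hu : u ∈ G.ends s := by rw [h]; exact Sym2.mem_mk_left _ _
              exact ⟨hu, hinc⟩
          refine Finset.mem_biUnion.mpr ⟨s, ?_, ?_⟩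
          · simp [hkey.1, hvs]
          · exact Finset.mem_image.mpr ⟨y, Multigraph.mem_endsF.mpr hkey.2, hcontra.symm⟩
        · -- (v, e) vs old: forbidden by F2
          dsimp only at hadj ⊢
          intro hcontra
          apply hc2F
          rw [hF2]
          have hkey : y = u ∧ u ∈ G.ends s := by
            rcases hadj with h | h | h | h
            · exact absurd (by rw [h]; exact hinc) hvs
            · exact absurd (by rw [h] at hve; exact hve) hvs
            · rw [hendse, Sym2.eq_iff] at h
              rcases h with ⟨-, h2⟩ | ⟨h1, -⟩
              · exact ⟨h2.symm, by rw [h2]; exact hinc⟩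
              · exact absurd (by rw [h1]; exact hinc) hvs
            · exfalso
              apply hvs
              rw [h]
              exact Sym2.mem_mk_left _ _
          apply Finset.mem_union_left
          refine Finset.mem_image.mpr ⟨s, by simp [hkey.2, hvs], ?_⟩
          rw [← hkey.1]
          exact hcontra.symm
      · -- pairwise new-new
        refine List.pairwise_cons.mpr ⟨?_, by simp⟩
        rintro qd hqd hadj
        rw [List.mem_singleton] at hqd
        subst hqd
        dsimp only
        intro h
        apply hc2F
        have h' : c2 = c1 := h.symm
        rw [hF2]
        exact Finset.mem_union_right _ (Finset.mem_singleton.mpr h')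
    · -- degree 2
      obtain ⟨e, f, hef, hAv⟩ := Finset.card_eq_two.mp hcard
      have hve : v ∈ G.ends e := Multigraph.mem_edgesAt.mp (by rw [hAv]; simp)
      have hvf : v ∈ G.ends f := Multigraph.mem_edgesAt.mp (by rw [hAv]; simp)
      obtain ⟨u, huv, hendse⟩ := G.other_end hve
      obtain ⟨u2, hu2v, hendsf⟩ := G.other_end hvf
      have hue : u ∈ G.ends e := by rw [hendse]; exact Sym2.mem_mk_right _ _
      have hu2f : u2 ∈ G.ends f := by rw [hendsf]; exact Sym2.mem_mk_right _ _
      have hnotv : ∀ t, v ∈ G.ends t → t = e ∨ t = f := by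
        intro t ht
        have : t ∈ G.edgesAt v := Multigraph.mem_edgesAt.mpr ht
        rw [hAv] at this
        simpa using this
      have hfst : ∀ {a b : V} {c d : E}, a ≠ b → (a, c) ≠ (b, d) :=
        fun h hh => h (congrArg Prod.fst hh)
      have hsnd : ∀ {a b : V} {c d : E}, c ≠ d → (a, c) ≠ (b, d) :=
        fun h hh => h (congrArg Prod.snd hh)
      set Pu : Finset E := Finset.univ.filter (fun t => u ∈ G.ends t ∧ v ∉ G.ends t) with hPu
      set Pu2 : Finset E := Finset.univ.filter (fun t => u2 ∈ G.ends t ∧ v ∉ G.ends t) with hPu2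
      have hPuP : ∀ t ∈ Pu, u ∈ G.ends t ∧ v ∉ G.ends t := by
        intro t ht; rw [hPu] at ht; simpa using ht
      have hPu2P : ∀ t ∈ Pu2, u2 ∈ G.ends t ∧ v ∉ G.ends t := by
        intro t ht; rw [hPu2] at ht; simpa using ht
      have hPucard : Pu.card ≤ 2 := card_le_two_of G hdeg hue hve Pu hPuP
      have hPu2card : Pu2.card ≤ 2 := card_le_two_of G hdeg hu2f hvf Pu2 hPu2P
      have hmemPu : ∀ {y : V} {s : E}, u ∈ G.ends s → v ∉ G.ends s → s ∈ Pu := by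
        intro y s h1 h2; rw [hPu]; simp [h1, h2]
      have hmemPu2 : ∀ {y : V} {s : E}, u2 ∈ G.ends s → v ∉ G.ends s → s ∈ Pu2 := by
        intro y s h1 h2; rw [hPu2]; simp [h1, h2]
      set F1 : Finset ℕ := Pu.biUnion (fun t => (G.endsF t).image (fun x => ψ (x, t))) with hF1
      have hF1card : F1.card ≤ 4 := by
        refine le_trans (Finset.card_biUnion_le_card_mul _ _ 2 (fun t _ =>
          le_trans (Finset.card_image_le) (G.endsF_card t))) (by omega)
      obtain ⟨c1, hc1L, hc1F⟩ := exists_color (F := F1) (hIncCard u e hue) (by omega)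
      set F2 : Finset ℕ := (Pu2.biUnion (fun t => (G.endsF t).image (fun x => ψ (x, t)))) ∪ {c1}
        with hF2
      have hF2card : F2.card ≤ 5 := by
        refine le_trans (Finset.card_union_le _ _) ?_
        have := Finset.card_biUnion_le_card_mul Pu2
          (fun t => (G.endsF t).image (fun x => ψ (x, t))) 2 (fun t _ =>
          le_trans (Finset.card_image_le) (G.endsF_card t))
        simp only [Finset.card_singleton]
        omega
      obtain ⟨c2, hc2L, hc2F⟩ := exists_color (F := F2) (hIncCard u2 f hu2f) (by omega)
      set F3 : Finset ℕ := (Pu.image (fun t => ψ (u, t))) ∪ {c1, c2} with hF3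
      have hF3card : F3.card ≤ 4 := by
        refine le_trans (Finset.card_union_le _ _) ?_
        have h1 := Finset.card_image_le (s := Pu) (f := fun t => ψ (u, t))
        have h2 : ({c1, c2} : Finset ℕ).card ≤ 2 :=
          le_trans (Finset.card_insert_le _ _) (by simp)
        omega
      obtain ⟨c3, hc3L, hc3F⟩ := exists_color (F := F3) (hIncCard v e hve) (by omega)
      set F4 : Finset ℕ := (Pu2.image (fun t => ψ (u2, t))) ∪ {c1, c2, c3} with hF4
      have hF4card : F4.card ≤ 5 := by
        refine le_trans (Finset.card_union_le _ _) ?_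
        have h1 := Finset.card_image_le (s := Pu2) (f := fun t => ψ (u2, t))
        have h2 : ({c1, c2, c3} : Finset ℕ).card ≤ 3 :=
          le_trans (Finset.card_insert_le _ _) (by
            have := Finset.card_insert_le c2 ({c3} : Finset ℕ)
            simp only [Finset.card_singleton] at this ⊢
            omega)
        omega
      obtain ⟨c4, hc4L, hc4F⟩ := exists_color (F := F4) (hIncCard v f hvf) (by omega)
      have hnOld : ∀ (x : V) (t : E), v ∈ G.ends t → ¬ Old (x, t) := by
        intro x t ht hOldq
        exact ((hOldIff t).mp hOldq) ht
      refine ⟨_, extend_coloring G L ψ Old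
        [((u, e), c1), ((u2, f), c2), ((v, e), c3), ((v, f), c4)] hOldL holdold ?_ ?_ ?_ ?_ ?_⟩
      · rintro pc hpc
        simp only [List.mem_cons, List.mem_singleton, List.not_mem_nil, or_false] at hpc
        rcases hpc with h | h | h | h
        · exact h ▸ ⟨hnOld u e hve, hue, hc1L⟩
        · exact h ▸ ⟨hnOld u2 f hvf, hu2f, hc2L⟩
        · exact h ▸ ⟨hnOld v e hve, hve, hc3L⟩
        · exact h ▸ ⟨hnOld v f hvf, hvf, hc4L⟩
      · -- cover
        rintro ⟨x, t⟩ hinc hOldq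
        have hvt : v ∈ G.ends t := by
          by_contra h
          exact hOldq ((hOldIff t).mpr h)
        simp only [List.map_cons, List.map_nil, List.mem_cons, List.mem_singleton]
        rcases hnotv t hvt with rfl | rfl
        · have hxe : x ∈ G.ends t := hinc
          rw [hendse, Sym2.mem_iff] at hxe
          rcases hxe with rfl | rfl
          · right; right; left; rfl
          · left; rfl
        · have hxf : x ∈ G.ends t := hinc
          rw [hendsf, Sym2.mem_iff] at hxf
          rcases hxf with rfl | rfl
          · right; right; right; left; rfl
          · right; left; rfl
      · -- nodup
        show ([(u, e), (u2, f), (v, e), (v, f)] : List (V × E)).Nodup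
        refine List.nodup_cons.mpr ⟨?_, List.nodup_cons.mpr ⟨?_,
          List.nodup_cons.mpr ⟨?_, List.nodup_singleton _⟩⟩⟩
        · simp only [List.mem_cons, List.not_mem_nil, or_false, not_or]
          exact ⟨hsnd hef, hfst huv, hsnd hef⟩
        · simp only [List.mem_cons, List.not_mem_nil, or_false, not_or]
          exact ⟨hsnd (Ne.symm hef), hfst hu2v⟩
        · simp only [List.mem_cons, List.not_mem_nil, or_false]
          exact hsnd hef
      · -- new-old
        rintro pc hpc ⟨y, s⟩ hinc hOldq hadj
        have hvs : v ∉ G.ends s := (hOldIff s).mp hOldq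
        have hyinc : y ∈ G.ends s := hinc
        simp only [List.mem_cons, List.mem_singleton, List.not_mem_nil, or_false] at hpc
        rcases hpc with h | h | h | h
        all_goals (subst h; dsimp only at hadj ⊢)
        · -- (u,e)
          intro hcontra
          apply hc1F
          rw [hF1]
          have hkey : u ∈ G.ends s := by
            rcases hadj with h | h | h | h
            · rw [h]; exact hyinc
            · exact absurd (h ▸ hve) hvs
            · exfalso
              rw [hendse, Sym2.eq_iff] at h
              rcases h with ⟨h1, -⟩ | ⟨h1, -⟩
              · exact huv h1.symm
              · exact hvs (h1 ▸ hyinc)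
            · rw [h]; exact Sym2.mem_mk_left _ _
          exact Finset.mem_biUnion.mpr ⟨s, hmemPu (y := y) hkey hvs,
            Finset.mem_image.mpr ⟨y, Multigraph.mem_endsF.mpr hyinc, hcontra.symm⟩⟩
        · -- (u2,f)
          intro hcontra
          apply hc2F
          rw [hF2]
          apply Finset.mem_union_left
          have hkey : u2 ∈ G.ends s := by
            rcases hadj with h | h | h | h
            · rw [h]; exact hyinc
            · exact absurd (h ▸ hvf) hvs
            · exfalso
              rw [hendsf, Sym2.eq_iff] at h
              rcases h with ⟨h1, -⟩ | ⟨h1, -⟩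
              · exact hu2v h1.symm
              · exact hvs (h1 ▸ hyinc)
            · rw [h]; exact Sym2.mem_mk_left _ _
          exact Finset.mem_biUnion.mpr ⟨s, hmemPu2 (y := y) hkey hvs,
            Finset.mem_image.mpr ⟨y, Multigraph.mem_endsF.mpr hyinc, hcontra.symm⟩⟩
        · -- (v,e)
          intro hcontra
          apply hc3F
          rw [hF3]
          apply Finset.mem_union_left
          have hkey : y = u := by
            rcases hadj with h | h | h | h
            · exact absurd (h ▸ hyinc) hvs
            · exact absurd (h ▸ hve) hvs
            · rw [hendse, Sym2.eq_iff] at h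
              rcases h with ⟨-, h2⟩ | ⟨h1, -⟩
              · exact h2.symm
              · exact absurd (h1 ▸ hyinc) hvs
            · exact absurd (by rw [h]; exact Sym2.mem_mk_left _ _) hvs
          subst hkey
          exact Finset.mem_image.mpr ⟨s, hmemPu (y := y) hyinc hvs, hcontra.symm⟩
        · -- (v,f)
          intro hcontra
          apply hc4F
          rw [hF4]
          apply Finset.mem_union_left
          have hkey : y = u2 := by
            rcases hadj with h | h | h | h
            · exact absurd (h ▸ hyinc) hvs
            · exact absurd (h ▸ hvf) hvs
            · rw [hendsf, Sym2.eq_iff] at h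
              rcases h with ⟨-, h2⟩ | ⟨h1, -⟩
              · exact h2.symm
              · exact absurd (h1 ▸ hyinc) hvs
            · exact absurd (by rw [h]; exact Sym2.mem_mk_left _ _) hvs
          subst hkey
          exact Finset.mem_image.mpr ⟨s, hmemPu2 (y := y) hyinc hvs, hcontra.symm⟩
      · -- pairwise new-new
        refine List.Pairwise.cons ?_ (List.Pairwise.cons ?_ (List.Pairwise.cons ?_
          (List.pairwise_singleton _ _)))
        · rintro qd hqd hadj h
          simp only [List.mem_cons, List.not_mem_nil, or_false] at hqd
          rcases hqd with h1 | h1 | h1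
          · subst h1
            have h' : c1 = c2 := h
            apply hc2F
            rw [hF2]
            exact Finset.mem_union_right _ (Finset.mem_singleton.mpr h'.symm)
          · subst h1
            have h' : c1 = c3 := h
            apply hc3F
            rw [hF3]
            exact Finset.mem_union_right _ (Finset.mem_insert.mpr (Or.inl h'.symm))
          · subst h1
            have h' : c1 = c4 := h
            apply hc4F
            rw [hF4]
            exact Finset.mem_union_right _ (Finset.mem_insert.mpr (Or.inl h'.symm))
        · rintro qd hqd hadj h
          simp only [List.mem_cons, List.not_mem_nil, or_false] at hqd
          rcases hqd with h1 | h1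
          · subst h1
            have h' : c2 = c3 := h
            apply hc3F
            rw [hF3]
            exact Finset.mem_union_right _ (Finset.mem_insert.mpr (Or.inr (Finset.mem_singleton.mpr h'.symm)))
          · subst h1
            have h' : c2 = c4 := h
            apply hc4F
            rw [hF4]
            exact Finset.mem_union_right _ (Finset.mem_insert.mpr (Or.inr (Finset.mem_insert.mpr (Or.inl h'.symm))))
        · rintro qd hqd hadj h
          simp only [List.mem_cons, List.not_mem_nil, or_false] at hqd
          subst hqd
          have h' : c3 = c4 := h
          apply hc4F
          rw [hF4]
          exact Finset.mem_union_right _ (Finset.mem_insert.mpr (Or.inr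
            (Finset.mem_insert.mpr (Or.inr (Finset.mem_singleton.mpr h'.symm)))))
  refine ⟨hdeg3, ?_⟩
  intro e f hGef
  by_contra hef
  obtain ⟨u, v, huv, hendse⟩ := G.exists_ends e
  have hendsf : G.ends f = s(u, v) := hGef ▸ hendse
  have hue : u ∈ G.ends e := by rw [hendse]; exact Sym2.mem_mk_left _ _
  have hve : v ∈ G.ends e := by rw [hendse]; exact Sym2.mem_mk_right _ _
  have huf : u ∈ G.ends f := by rw [hendsf]; exact Sym2.mem_mk_left _ _
  have hvf : v ∈ G.ends f := by rw [hendsf]; exact Sym2.mem_mk_right _ _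
  have hcardu : (G.edgesAt u).card = 3 := by rw [← G.degree_eq u]; exact hdeg3 u
  have hcardv : (G.edgesAt v).card = 3 := by rw [← G.degree_eq v]; exact hdeg3 v
  have hcardef : ({e, f} : Finset E).card = 2 := by
    rw [Finset.card_insert_of_notMem (by simpa using hef)]
    simp
  have hgex : 1 ≤ (G.edgesAt u \ {e, f}).card := by
    have := Finset.le_card_sdiff ({e, f} : Finset E) (G.edgesAt u)
    omega
  obtain ⟨g, hg⟩ := Finset.card_pos.mp (by omega : 0 < (G.edgesAt u \ {e, f}).card)
  rw [Finset.mem_sdiff] at hg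
  have hgu : u ∈ G.ends g := Multigraph.mem_edgesAt.mp hg.1
  have hge : g ≠ e := fun h => hg.2 (by simp [h])
  have hgf : g ≠ f := fun h => hg.2 (by simp [h])
  have hcardefg : ({e, f, g} : Finset E).card = 3 := by
    rw [Finset.card_insert_of_notMem (by simp [hef, Ne.symm hge]),
      Finset.card_insert_of_notMem (by simp [Ne.symm hgf])]
    simp
  have hEu : ({e, f, g} : Finset E) = G.edgesAt u := by
    refine Finset.eq_of_subset_of_card_le ?_ (by omega)
    intro t ht
    simp only [Finset.mem_insert, Finset.mem_singleton] at ht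
    rcases ht with rfl | rfl | rfl
    · exact Multigraph.mem_edgesAt.mpr hue
    · exact Multigraph.mem_edgesAt.mpr huf
    · exact hg.1
  have hAu : ∀ t, u ∈ G.ends t → t = e ∨ t = f ∨ t = g := by
    intro t ht
    have : t ∈ ({e, f, g} : Finset E) := hEu ▸ Multigraph.mem_edgesAt.mpr ht
    simpa using this
  -- the coloring argument
  apply hnot
  intro L hL
  obtain ⟨ψ, hψL, hψP⟩ := delete_choosable G hdeg hmin {u, v} ⟨u, by simp⟩ L hL
  set Old : V × E → Prop := fun q => ∀ z ∈ G.ends q.2, z ∉ ({u, v} : Set V) with hOldDef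
  have hOldIff : ∀ s : E, (∀ z ∈ G.ends s, z ∉ ({u, v} : Set V)) ↔
      (u ∉ G.ends s ∧ v ∉ G.ends s) := by
    intro s
    constructor
    · exact fun h => ⟨fun hu => h u hu (by simp), fun hv => h v hv (by simp)⟩
    · rintro ⟨h1, h2⟩ z hz hzuv
      simp only [Set.mem_insert_iff, Set.mem_singleton_iff] at hzuv
      rcases hzuv with rfl | rfl
      · exact h1 hz
      · exact h2 hz
  have hOldL : ∀ q : V × E, G.IsInc q.1 q.2 → Old q → ψ q ∈ L q := fun q h1 h2 =>
    hψL q.1 q.2 h1 h2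
  have holdold : ∀ p q : V × E, G.IsInc p.1 p.2 → G.IsInc q.1 q.2 → Old p → Old q →
      p ≠ q → G.IncAdj p.1 p.2 q.1 q.2 → ψ p ≠ ψ q := by
    intro p q h1 h2 h3 h4 h5 h6
    have := hψP p.1 p.2 q.1 q.2 h1 h2 h3 h4 (by simpa using h5) h6
    simpa using this
  have hIncCard : ∀ x t, G.IsInc x t → 6 ≤ (L (x, t)).card := fun x t h =>
    le_of_eq (hL x t h).symm
  have hnOld : ∀ (x : V) (t : E), u ∈ G.ends t ∨ v ∈ G.ends t → ¬ Old (x, t) := by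
    intro x t ht hOldq
    rcases ht with h | h
    · exact ((hOldIff t).mp hOldq).1 h
    · exact ((hOldIff t).mp hOldq).2 h
  have hk_noold : ∀ (x : V) (t : E), G.ends t = s(u, v) → (x = u ∨ x = v) →
      ∀ (y : V) (s : E), y ∈ G.ends s → u ∉ G.ends s → v ∉ G.ends s →
      G.IncAdj x t y s → False := by
    intro x t hends hx y s hy hu2 hv2 hadj
    rcases hadj with h | h | h | h
    · subst h
      rcases hx with rfl | rfl
      · exact hu2 hy
      · exact hv2 hy
    · apply hu2
      rw [← h, hends]
      exact Sym2.mem_mk_left _ _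
    · rw [hends, Sym2.eq_iff] at h
      rcases h with ⟨-, h2⟩ | ⟨h1, -⟩
      · apply hv2; rw [h2]; exact hy
      · apply hu2; rw [h1]; exact hy
    · have : x ∈ G.ends s := by rw [h]; exact Sym2.mem_mk_left _ _
      rcases hx with rfl | rfl
      · exact hu2 this
      · exact hv2 this
  have hfst : ∀ {a b : V} {c d : E}, a ≠ b → (a, c) ≠ (b, d) :=
    fun h hh => h (congrArg Prod.fst hh)
  have hsnd : ∀ {a b : V} {c d : E}, c ≠ d → (a, c) ≠ (b, d) :=
    fun h hh => h (congrArg Prod.snd hh)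
  by_cases hvg : v ∈ G.ends g
  · -- Case A: triple edge, ends g = s(u, v)
    have hendsg : G.ends g = s(u, v) := ((Sym2.mem_and_mem_iff huv).mp ⟨hgu, hvg⟩)
    have hcardvefg : ({e, f, g} : Finset E) = G.edgesAt v := by
      refine Finset.eq_of_subset_of_card_le ?_ (by omega)
      intro t ht
      simp only [Finset.mem_insert, Finset.mem_singleton] at ht
      rcases ht with rfl | rfl | rfl
      · exact Multigraph.mem_edgesAt.mpr hve
      · exact Multigraph.mem_edgesAt.mpr hvf
      · exact Multigraph.mem_edgesAt.mpr hvg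
    have hAv : ∀ t, v ∈ G.ends t → t = e ∨ t = f ∨ t = g := by
      intro t ht
      have : t ∈ ({e, f, g} : Finset E) := hcardvefg ▸ Multigraph.mem_edgesAt.mpr ht
      simpa using this
    obtain ⟨c1, hc1L, hc1F⟩ := exists_color (F := (∅ : Finset ℕ)) (hIncCard u e hue) (by simp)
    obtain ⟨c2, hc2L, hc2F⟩ := exists_color (F := ({c1} : Finset ℕ)) (hIncCard v e hve)
      (by simp)
    obtain ⟨c3, hc3L, hc3F⟩ := exists_color (F := ({c1, c2} : Finset ℕ)) (hIncCard u f huf)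
      (by
        have h1 := Finset.card_insert_le c1 ({c2} : Finset ℕ)
        simp only [Finset.card_singleton] at h1 ⊢
        omega)
    obtain ⟨c4, hc4L, hc4F⟩ := exists_color (F := ({c1, c2, c3} : Finset ℕ)) (hIncCard v f hvf)
      (by
        have h1 := Finset.card_insert_le c1 ({c2, c3} : Finset ℕ)
        have h2 := Finset.card_insert_le c2 ({c3} : Finset ℕ)
        simp only [Finset.card_singleton] at h1 h2 ⊢
        omega)
    obtain ⟨c5, hc5L, hc5F⟩ := exists_color (F := ({c1, c2, c3, c4} : Finset ℕ))
      (hIncCard u g hgu) (by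
        have h1 := Finset.card_insert_le c1 ({c2, c3, c4} : Finset ℕ)
        have h2 := Finset.card_insert_le c2 ({c3, c4} : Finset ℕ)
        have h3 := Finset.card_insert_le c3 ({c4} : Finset ℕ)
        simp only [Finset.card_singleton] at h1 h2 h3 ⊢
        omega)
    obtain ⟨c6, hc6L, hc6F⟩ := exists_color (F := ({c1, c2, c3, c4, c5} : Finset ℕ))
      (hIncCard v g hvg) (by
        have h1 := Finset.card_insert_le c1 ({c2, c3, c4, c5} : Finset ℕ)
        have h2 := Finset.card_insert_le c2 ({c3, c4, c5} : Finset ℕ)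
        have h3 := Finset.card_insert_le c3 ({c4, c5} : Finset ℕ)
        have h4 := Finset.card_insert_le c4 ({c5} : Finset ℕ)
        simp only [Finset.card_singleton] at h1 h2 h3 h4 ⊢
        omega)
    refine ⟨_, extend_coloring G L ψ Old
      [((u, e), c1), ((v, e), c2), ((u, f), c3), ((v, f), c4), ((u, g), c5), ((v, g), c6)]
      hOldL holdold ?_ ?_ ?_ ?_ ?_⟩
    · rintro pc hpc
      simp only [List.mem_cons, List.not_mem_nil, or_false] at hpc
      rcases hpc with h | h | h | h | h | h
      · exact h ▸ ⟨hnOld u e (Or.inl hue), hue, hc1L⟩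
      · exact h ▸ ⟨hnOld v e (Or.inl hue), hve, hc2L⟩
      · exact h ▸ ⟨hnOld u f (Or.inl huf), huf, hc3L⟩
      · exact h ▸ ⟨hnOld v f (Or.inl huf), hvf, hc4L⟩
      · exact h ▸ ⟨hnOld u g (Or.inl hgu), hgu, hc5L⟩
      · exact h ▸ ⟨hnOld v g (Or.inl hgu), hvg, hc6L⟩
    · -- cover
      rintro ⟨x, t⟩ hinc hOldq
      have hxy : x ∈ G.ends t := hinc
      have ht : t = e ∨ t = f ∨ t = g := by
        by_cases hu2 : u ∈ G.ends t
        · exact hAu t hu2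
        · by_cases hv2 : v ∈ G.ends t
          · exact hAv t hv2
          · exact absurd ((hOldIff t).mpr ⟨hu2, hv2⟩) hOldq
      simp only [List.map_cons, List.map_nil, List.mem_cons, List.not_mem_nil, or_false]
      rcases ht with rfl | rfl | rfl
      · rw [hendse, Sym2.mem_iff] at hxy
        rcases hxy with rfl | rfl
        · left; rfl
        · right; left; rfl
      · rw [hendsf, Sym2.mem_iff] at hxy
        rcases hxy with rfl | rfl
        · right; right; left; rfl
        · right; right; right; left; rfl
      · rw [hendsg, Sym2.mem_iff] at hxy
        rcases hxy with rfl | rfl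
        · right; right; right; right; left; rfl
        · right; right; right; right; right; rfl
    · -- nodup
      show ([(u, e), (v, e), (u, f), (v, f), (u, g), (v, g)] : List (V × E)).Nodup
      refine List.nodup_cons.mpr ⟨?_, List.nodup_cons.mpr ⟨?_, List.nodup_cons.mpr ⟨?_,
        List.nodup_cons.mpr ⟨?_, List.nodup_cons.mpr ⟨?_, List.nodup_singleton _⟩⟩⟩⟩⟩
      · simp only [List.mem_cons, List.not_mem_nil, or_false, not_or]
        exact ⟨hfst huv, hsnd hef, hsnd hef, hsnd (Ne.symm hge), hsnd (Ne.symm hge)⟩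
      · simp only [List.mem_cons, List.not_mem_nil, or_false, not_or]
        exact ⟨hsnd hef, hsnd hef, hsnd (Ne.symm hge), hsnd (Ne.symm hge)⟩
      · simp only [List.mem_cons, List.not_mem_nil, or_false, not_or]
        exact ⟨hfst huv, hsnd (Ne.symm hgf), hsnd (Ne.symm hgf)⟩
      · simp only [List.mem_cons, List.not_mem_nil, or_false, not_or]
        exact ⟨hsnd (Ne.symm hgf), hsnd (Ne.symm hgf)⟩
      · simp only [List.mem_cons, List.not_mem_nil, or_false]
        exact hfst huv
    · -- new-old: no old incidence is adjacent to any new one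
      rintro pc hpc ⟨y, s⟩ hinc hOldq hadj
      have hyinc : y ∈ G.ends s := hinc
      have hus : u ∉ G.ends s := ((hOldIff s).mp hOldq).1
      have hvs : v ∉ G.ends s := ((hOldIff s).mp hOldq).2
      simp only [List.mem_cons, List.not_mem_nil, or_false] at hpc
      exfalso
      rcases hpc with h | h | h | h | h | h
      all_goals subst h
      all_goals dsimp only at hadj
      · exact hk_noold u e hendse (Or.inl rfl) y s hyinc hus hvs hadj
      · exact hk_noold v e hendse (Or.inr rfl) y s hyinc hus hvs hadj
      · exact hk_noold u f hendsf (Or.inl rfl) y s hyinc hus hvs hadj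
      · exact hk_noold v f hendsf (Or.inr rfl) y s hyinc hus hvs hadj
      · exact hk_noold u g hendsg (Or.inl rfl) y s hyinc hus hvs hadj
      · exact hk_noold v g hendsg (Or.inr rfl) y s hyinc hus hvs hadj
    · -- pairwise: all six colors distinct
      have hmem2 : ∀ {x : ℕ}, x ∈ ({c1} : Finset ℕ) → c2 ≠ x := fun hx h => hc2F (h ▸ hx)
      refine List.Pairwise.cons ?_ (List.Pairwise.cons ?_ (List.Pairwise.cons ?_
        (List.Pairwise.cons ?_ (List.Pairwise.cons ?_ (List.pairwise_singleton _ _)))))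
      · rintro qd hqd hadj h
        simp only [List.mem_cons, List.not_mem_nil, or_false] at hqd
        rcases hqd with h1 | h1 | h1 | h1 | h1
        · subst h1
          have h' : c1 = c2 := h
          refine hc2F ?_
          rw [← h']
          simp
        · subst h1
          have h' : c1 = c3 := h
          refine hc3F ?_
          rw [← h']
          simp
        · subst h1
          have h' : c1 = c4 := h
          refine hc4F ?_
          rw [← h']
          simp
        · subst h1
          have h' : c1 = c5 := h
          refine hc5F ?_
          rw [← h']
          simp
        · subst h1
          have h' : c1 = c6 := h
          refine hc6F ?_
          rw [← h']
          simp
      · rintro qd hqd hadj h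
        simp only [List.mem_cons, List.not_mem_nil, or_false] at hqd
        rcases hqd with h1 | h1 | h1 | h1
        · subst h1
          have h' : c2 = c3 := h
          refine hc3F ?_
          rw [← h']
          simp
        · subst h1
          have h' : c2 = c4 := h
          refine hc4F ?_
          rw [← h']
          simp
        · subst h1
          have h' : c2 = c5 := h
          refine hc5F ?_
          rw [← h']
          simp
        · subst h1
          have h' : c2 = c6 := h
          refine hc6F ?_
          rw [← h']
          simp
      · rintro qd hqd hadj h
        simp only [List.mem_cons, List.not_mem_nil, or_false] at hqd
        rcases hqd with h1 | h1 | h1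
        · subst h1
          have h' : c3 = c4 := h
          refine hc4F ?_
          rw [← h']
          simp
        · subst h1
          have h' : c3 = c5 := h
          refine hc5F ?_
          rw [← h']
          simp
        · subst h1
          have h' : c3 = c6 := h
          refine hc6F ?_
          rw [← h']
          simp
      · rintro qd hqd hadj h
        simp only [List.mem_cons, List.not_mem_nil, or_false] at hqd
        rcases hqd with h1 | h1
        · subst h1
          have h' : c4 = c5 := h
          refine hc5F ?_
          rw [← h']
          simp
        · subst h1
          have h' : c4 = c6 := h
          refine hc6F ?_
          rw [← h']
          simp
      · rintro qd hqd hadj h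
        simp only [List.mem_cons, List.not_mem_nil, or_false] at hqd
        subst hqd
        have h' : c5 = c6 := h
        refine hc6F ?_
        rw [← h']
        simp
  · -- Case B: third edge g at u goes to w ∉ {u, v}
    obtain ⟨w, hwu, hendsg⟩ := G.other_end hgu
    have hwg : w ∈ G.ends g := by rw [hendsg]; exact Sym2.mem_mk_right _ _
    have hwv : w ≠ v := fun h => hvg (h ▸ hwg)
    have hh2ex : 1 ≤ (G.edgesAt v \ {e, f}).card := by
      have := Finset.le_card_sdiff ({e, f} : Finset E) (G.edgesAt v)
      omega
    obtain ⟨h2, hh2⟩ := Finset.card_pos.mp (by omega : 0 < (G.edgesAt v \ {e, f}).card)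
    rw [Finset.mem_sdiff] at hh2
    have hh2v : v ∈ G.ends h2 := Multigraph.mem_edgesAt.mp hh2.1
    have hh2e : h2 ≠ e := fun h => hh2.2 (by simp [h])
    have hh2f : h2 ≠ f := fun h => hh2.2 (by simp [h])
    have hcardefh2 : ({e, f, h2} : Finset E).card = 3 := by
      rw [Finset.card_insert_of_notMem (by simp [hef, Ne.symm hh2e]),
        Finset.card_insert_of_notMem (by simp [Ne.symm hh2f])]
      simp
    have hEv : ({e, f, h2} : Finset E) = G.edgesAt v := by
      refine Finset.eq_of_subset_of_card_le ?_ (by omega)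
      intro t ht
      simp only [Finset.mem_insert, Finset.mem_singleton] at ht
      rcases ht with rfl | rfl | rfl
      · exact Multigraph.mem_edgesAt.mpr hve
      · exact Multigraph.mem_edgesAt.mpr hvf
      · exact hh2.1
    have hAv : ∀ t, v ∈ G.ends t → t = e ∨ t = f ∨ t = h2 := by
      intro t ht
      have : t ∈ ({e, f, h2} : Finset E) := hEv ▸ Multigraph.mem_edgesAt.mpr ht
      simpa using this
    have huh2 : u ∉ G.ends h2 := by
      intro h
      rcases hAu h2 h with rfl | rfl | rfl
      · exact hh2e rfl
      · exact hh2f rfl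
      · exact hvg hh2v
    obtain ⟨v2, hv2v, hendsh2⟩ := G.other_end hh2v
    have hv2h2 : v2 ∈ G.ends h2 := by rw [hendsh2]; exact Sym2.mem_mk_right _ _
    have hv2u : v2 ≠ u := fun h => huh2 (h ▸ hv2h2)
    have hgh2 : g ≠ h2 := fun h => huh2 (h ▸ hgu)
    have hedgecard : ∀ x : V, (G.edgesAt x).card ≤ 3 := by
      intro x
      have := hdeg x
      rwa [G.degree_eq x] at this
    -- color of (w, g)
    set Tw : Finset E := Finset.univ.filter
      (fun t => w ∈ G.ends t ∧ u ∉ G.ends t ∧ v ∉ G.ends t) with hTw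
    have hTwP : ∀ t ∈ Tw, w ∈ G.ends t ∧ u ∉ G.ends t := by
      intro t ht; rw [hTw] at ht
      simp only [Finset.mem_filter] at ht
      exact ⟨ht.2.1, ht.2.2.1⟩
    have hTwcard : Tw.card ≤ 2 := card_le_two_of G hdeg hwg hgu Tw hTwP
    have hmemTw : ∀ {t : E}, w ∈ G.ends t → u ∉ G.ends t → v ∉ G.ends t → t ∈ Tw := by
      intro t h1 h2 h3; rw [hTw]; simp [h1, h2, h3]
    set F1 : Finset ℕ := Tw.biUnion (fun t => (G.endsF t).image (fun x => ψ (x, t))) with hF1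
    have hF1card : F1.card ≤ 4 :=
      le_trans (Finset.card_biUnion_le_card_mul _ _ 2 (fun t _ =>
        le_trans (Finset.card_image_le) (G.endsF_card t))) (by omega)
    obtain ⟨c1, hc1L, hc1F⟩ := exists_color (F := F1) (hIncCard w g hwg) (by omega)
    -- color of (v2, h2)
    set Tv2 : Finset E := Finset.univ.filter
      (fun t => v2 ∈ G.ends t ∧ u ∉ G.ends t ∧ v ∉ G.ends t) with hTv2
    have hTv2P : ∀ t ∈ Tv2, v2 ∈ G.ends t ∧ v ∉ G.ends t := by
      intro t ht; rw [hTv2] at ht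
      simp only [Finset.mem_filter] at ht
      exact ⟨ht.2.1, ht.2.2.2⟩
    have hTv2card : Tv2.card ≤ 2 := card_le_two_of G hdeg hv2h2 hh2v Tv2 hTv2P
    have hmemTv2 : ∀ {t : E}, v2 ∈ G.ends t → u ∉ G.ends t → v ∉ G.ends t → t ∈ Tv2 := by
      intro t h1 h2 h3; rw [hTv2]; simp [h1, h2, h3]
    set F2 : Finset ℕ := (Tv2.biUnion (fun t => (G.endsF t).image (fun x => ψ (x, t)))) ∪ {c1}
      with hF2
    have hF2card : F2.card ≤ 5 := by
      refine le_trans (Finset.card_union_le _ _) ?_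
      have := Finset.card_biUnion_le_card_mul Tv2
        (fun t => (G.endsF t).image (fun x => ψ (x, t))) 2 (fun t _ =>
        le_trans (Finset.card_image_le) (G.endsF_card t))
      simp only [Finset.card_singleton]
      omega
    obtain ⟨c2, hc2L, hc2F⟩ := exists_color (F := F2) (hIncCard v2 h2 hv2h2) (by omega)
    -- available colors for (u, g) and (v, h2), and the matching trick
    set φw : E → ℕ := fun t => if t = g then c1 else if t = h2 then c2 else ψ (w, t) with hφw
    set Fa : Finset ℕ := (G.edgesAt w).image φw with hFa
    have hFacard : Fa.card ≤ 3 := le_trans Finset.card_image_le (hedgecard w)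
    set A : Finset ℕ := L (u, g) \ Fa with hA
    have hAcard : 3 ≤ A.card := by
      rw [hA]
      have h1 := Finset.le_card_sdiff Fa (L (u, g))
      have h2 := hIncCard u g hgu
      omega
    set φv2 : E → ℕ := fun t => if t = h2 then c2 else if t = g then c1 else ψ (v2, t) with hφv2
    set Fb : Finset ℕ := (G.edgesAt v2).image φv2 with hFb
    have hFbcard : Fb.card ≤ 3 := le_trans Finset.card_image_le (hedgecard v2)
    set B : Finset ℕ := L (v, h2) \ Fb with hB
    have hBcard : 3 ≤ B.card := by
      rw [hB]
      have h1 := Finset.le_card_sdiff Fb (L (v, h2))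
      have h2 := hIncCard v h2 hh2v
      omega
    set M : Finset ℕ := L (u, e) \ {c1} with hM
    have hMcard : 5 ≤ M.card := by
      rw [hM]
      have h1 := Finset.le_card_sdiff ({c1} : Finset ℕ) (L (u, e))
      have h2 := hIncCard u e hue
      simp only [Finset.card_singleton] at h1
      omega
    obtain ⟨ca, hcaA, cb, hcbB, hM4⟩ := trick hAcard hBcard hMcard
    have hcaL : ca ∈ L (u, g) := (Finset.mem_sdiff.mp hcaA).1
    have hcaFa : ca ∉ Fa := (Finset.mem_sdiff.mp hcaA).2
    have hcbL : cb ∈ L (v, h2) := (Finset.mem_sdiff.mp hcbB).1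
    have hcbFb : cb ∉ Fb := (Finset.mem_sdiff.mp hcbB).2
    -- remaining colors
    obtain ⟨ck2, hck2L, hck2F⟩ := exists_color (F := ({c1, ca, cb} : Finset ℕ))
      (hIncCard u f huf) (by
        have h1 := Finset.card_insert_le c1 ({ca, cb} : Finset ℕ)
        have h2 := Finset.card_insert_le ca ({cb} : Finset ℕ)
        simp only [Finset.card_singleton] at h1 h2 ⊢
        omega)
    obtain ⟨ck3, hck3L, hck3F⟩ := exists_color (F := ({c2, ca, cb, ck2} : Finset ℕ))
      (hIncCard v e hve) (by
        have h1 := Finset.card_insert_le c2 ({ca, cb, ck2} : Finset ℕ)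
        have h2 := Finset.card_insert_le ca ({cb, ck2} : Finset ℕ)
        have h3 := Finset.card_insert_le cb ({ck2} : Finset ℕ)
        simp only [Finset.card_singleton] at h1 h2 h3 ⊢
        omega)
    obtain ⟨ck4, hck4L, hck4F⟩ := exists_color (F := ({c2, ca, cb, ck2, ck3} : Finset ℕ))
      (hIncCard v f hvf) (by
        have h1 := Finset.card_insert_le c2 ({ca, cb, ck2, ck3} : Finset ℕ)
        have h2 := Finset.card_insert_le ca ({cb, ck2, ck3} : Finset ℕ)
        have h3 := Finset.card_insert_le cb ({ck2, ck3} : Finset ℕ)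
        have h4 := Finset.card_insert_le ck2 ({ck3} : Finset ℕ)
        simp only [Finset.card_singleton] at h1 h2 h3 h4 ⊢
        omega)
    have hck1ex : 0 < ((M \ {ca, cb}) \ {ck2, ck3, ck4}).card := by
      have h1 := Finset.le_card_sdiff ({ck2, ck3, ck4} : Finset ℕ) (M \ {ca, cb})
      have h2 := Finset.card_insert_le ck2 ({ck3, ck4} : Finset ℕ)
      have h3 := Finset.card_insert_le ck3 ({ck4} : Finset ℕ)
      simp only [Finset.card_singleton] at h2 h3
      omega
    obtain ⟨ck1, hck1⟩ := Finset.card_pos.mp hck1ex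
    rw [Finset.mem_sdiff] at hck1
    obtain ⟨hck1M, hck1k⟩ := hck1
    rw [Finset.mem_sdiff] at hck1M
    obtain ⟨hck1M, hck1ab⟩ := hck1M
    rw [hM, Finset.mem_sdiff] at hck1M
    obtain ⟨hck1L, hck1c1⟩ := hck1M
    -- the extension
    refine ⟨_, extend_coloring G L ψ Old
      [((w, g), c1), ((v2, h2), c2), ((u, g), ca), ((v, h2), cb),
       ((u, f), ck2), ((v, e), ck3), ((v, f), ck4), ((u, e), ck1)]
      hOldL holdold ?_ ?_ ?_ ?_ ?_⟩
    · rintro pc hpc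
      simp only [List.mem_cons, List.not_mem_nil, or_false] at hpc
      rcases hpc with h | h | h | h | h | h | h | h
      · exact h ▸ ⟨hnOld w g (Or.inl hgu), hwg, hc1L⟩
      · exact h ▸ ⟨hnOld v2 h2 (Or.inr hh2v), hv2h2, hc2L⟩
      · exact h ▸ ⟨hnOld u g (Or.inl hgu), hgu, hcaL⟩
      · exact h ▸ ⟨hnOld v h2 (Or.inr hh2v), hh2v, hcbL⟩
      · exact h ▸ ⟨hnOld u f (Or.inl huf), huf, hck2L⟩
      · exact h ▸ ⟨hnOld v e (Or.inl hue), hve, hck3L⟩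
      · exact h ▸ ⟨hnOld v f (Or.inl huf), hvf, hck4L⟩
      · exact h ▸ ⟨hnOld u e (Or.inl hue), hue, hck1L⟩
    · -- cover
      rintro ⟨x, t⟩ hinc hOldq
      have hxy : x ∈ G.ends t := hinc
      simp only [List.map_cons, List.map_nil, List.mem_cons, List.not_mem_nil, or_false]
      by_cases hu2 : u ∈ G.ends t
      · rcases hAu t hu2 with rfl | rfl | rfl
        · rw [hendse, Sym2.mem_iff] at hxy
          rcases hxy with rfl | rfl
          · right; right; right; right; right; right; right; rfl
          · right; right; right; right; right; left; rfl
        · rw [hendsf, Sym2.mem_iff] at hxy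
          rcases hxy with rfl | rfl
          · right; right; right; right; left; rfl
          · right; right; right; right; right; right; left; rfl
        · rw [hendsg, Sym2.mem_iff] at hxy
          rcases hxy with rfl | rfl
          · right; right; left; rfl
          · left; rfl
      · by_cases hv2' : v ∈ G.ends t
        · rcases hAv t hv2' with rfl | rfl | rfl
          · rw [hendse, Sym2.mem_iff] at hxy
            rcases hxy with rfl | rfl
            · exact absurd hu2 (by simp [hue])
            · right; right; right; right; right; left; rfl
          · rw [hendsf, Sym2.mem_iff] at hxy
            rcases hxy with rfl | rfl
            · exact absurd hu2 (by simp [huf])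
            · right; right; right; right; right; right; left; rfl
          · rw [hendsh2, Sym2.mem_iff] at hxy
            rcases hxy with rfl | rfl
            · right; right; right; left; rfl
            · right; left; rfl
        · exact absurd ((hOldIff t).mpr ⟨hu2, hv2'⟩) hOldq
    · -- nodup
      show ([(w, g), (v2, h2), (u, g), (v, h2), (u, f), (v, e), (v, f), (u, e)] :
        List (V × E)).Nodup
      refine List.nodup_cons.mpr ⟨?_, List.nodup_cons.mpr ⟨?_, List.nodup_cons.mpr ⟨?_,
        List.nodup_cons.mpr ⟨?_, List.nodup_cons.mpr ⟨?_, List.nodup_cons.mpr ⟨?_,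
        List.nodup_cons.mpr ⟨?_, List.nodup_singleton _⟩⟩⟩⟩⟩⟩⟩
      · simp only [List.mem_cons, List.not_mem_nil, or_false, not_or]
        exact ⟨hsnd hgh2, hfst hwu, hsnd hgh2, hsnd hgf, hsnd hge, hsnd hgf, hsnd hge⟩
      · simp only [List.mem_cons, List.not_mem_nil, or_false, not_or]
        exact ⟨hsnd (Ne.symm hgh2), hfst hv2v, hsnd hh2f, hsnd hh2e, hsnd hh2f, hsnd hh2e⟩
      · simp only [List.mem_cons, List.not_mem_nil, or_false, not_or]
        exact ⟨hsnd hgh2, hsnd hgf, hsnd hge, hsnd hgf, hsnd hge⟩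
      · simp only [List.mem_cons, List.not_mem_nil, or_false, not_or]
        exact ⟨hsnd hh2f, hsnd hh2e, hsnd hh2f, hsnd hh2e⟩
      · simp only [List.mem_cons, List.not_mem_nil, or_false, not_or]
        exact ⟨hsnd (Ne.symm hef), hfst huv, hsnd (Ne.symm hef)⟩
      · simp only [List.mem_cons, List.not_mem_nil, or_false, not_or]
        exact ⟨hsnd hef, hfst (Ne.symm huv)⟩
      · simp only [List.mem_cons, List.not_mem_nil, or_false]
        exact hsnd (Ne.symm hef)
    · -- new-old
      rintro pc hpc ⟨y, s⟩ hinc hOldq hadj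
      have hyinc : y ∈ G.ends s := hinc
      have hus : u ∉ G.ends s := ((hOldIff s).mp hOldq).1
      have hvs : v ∉ G.ends s := ((hOldIff s).mp hOldq).2
      simp only [List.mem_cons, List.not_mem_nil, or_false] at hpc
      rcases hpc with h | h | h | h | h | h | h | h
      all_goals subst h
      all_goals dsimp only at hadj ⊢
      · -- (w, g) vs old
        intro hcontra
        apply hc1F
        rw [hF1]
        have hws : w ∈ G.ends s := by
          rcases hadj with h | h | h | h
          · rw [h]; exact hyinc
          · exact absurd (by rw [h] at hgu; exact hgu) hus
          · exfalso
            rw [hendsg, Sym2.eq_iff] at h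
            rcases h with ⟨h1, -⟩ | ⟨h1, -⟩
            · exact hwu h1.symm
            · exact hus (by rw [h1]; exact hyinc)
          · rw [h]; exact Sym2.mem_mk_left _ _
        exact Finset.mem_biUnion.mpr ⟨s, hmemTw hws hus hvs,
          Finset.mem_image.mpr ⟨y, Multigraph.mem_endsF.mpr hyinc, hcontra.symm⟩⟩
      · -- (v2, h2) vs old
        intro hcontra
        apply hc2F
        rw [hF2]
        apply Finset.mem_union_left
        have hv2s : v2 ∈ G.ends s := by
          rcases hadj with h | h | h | h
          · rw [h]; exact hyinc
          · exact absurd (by rw [h] at hh2v; exact hh2v) hvs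
          · exfalso
            rw [hendsh2, Sym2.eq_iff] at h
            rcases h with ⟨h1, -⟩ | ⟨h1, -⟩
            · exact hv2v h1.symm
            · exact hvs (by rw [h1]; exact hyinc)
          · rw [h]; exact Sym2.mem_mk_left _ _
        exact Finset.mem_biUnion.mpr ⟨s, hmemTv2 hv2s hus hvs,
          Finset.mem_image.mpr ⟨y, Multigraph.mem_endsF.mpr hyinc, hcontra.symm⟩⟩
      · -- (u, g) vs old
        intro hcontra
        apply hcaFa
        rw [hFa]
        have hyw : y = w := by
          rcases hadj with h | h | h | h
          · exact absurd (by rw [h]; exact hyinc) hus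
          · exact absurd (by rw [h] at hgu; exact hgu) hus
          · rw [hendsg, Sym2.eq_iff] at h
            rcases h with ⟨-, h2⟩ | ⟨h1, h2⟩
            · exact h2.symm
            · exact absurd h2 hwu
          · exact absurd (by rw [h]; exact Sym2.mem_mk_left _ _) hus
        subst hyw
        have hsg : s ≠ g := fun h => hus (h ▸ hgu)
        have hsh2 : s ≠ h2 := fun h => hvs (h ▸ hh2v)
        refine Finset.mem_image.mpr ⟨s, Multigraph.mem_edgesAt.mpr hyinc, ?_⟩
        rw [hφw]
        dsimp only
        rw [if_neg hsg, if_neg hsh2]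
        exact hcontra.symm
      · -- (v, h2) vs old
        intro hcontra
        apply hcbFb
        rw [hFb]
        have hyv2 : y = v2 := by
          rcases hadj with h | h | h | h
          · exact absurd (by rw [h]; exact hyinc) hvs
          · exact absurd (by rw [h] at hh2v; exact hh2v) hvs
          · rw [hendsh2, Sym2.eq_iff] at h
            rcases h with ⟨-, h2⟩ | ⟨h1, h2⟩
            · exact h2.symm
            · exact absurd h2 hv2v
          · exact absurd (by rw [h]; exact Sym2.mem_mk_left _ _) hvs
        subst hyv2
        have hsg : s ≠ g := fun h => hus (h ▸ hgu)
        have hsh2 : s ≠ h2 := fun h => hvs (h ▸ hh2v)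
        refine Finset.mem_image.mpr ⟨s, Multigraph.mem_edgesAt.mpr hyinc, ?_⟩
        rw [hφv2]
        dsimp only
        rw [if_neg hsh2, if_neg hsg]
        exact hcontra.symm
      · exact absurd hadj (fun ha => hk_noold u f hendsf (Or.inl rfl) y s hyinc hus hvs ha)
      · exact absurd hadj (fun ha => hk_noold v e hendse (Or.inr rfl) y s hyinc hus hvs ha)
      · exact absurd hadj (fun ha => hk_noold v f hendsf (Or.inr rfl) y s hyinc hus hvs ha)
      · exact absurd hadj (fun ha => hk_noold u e hendse (Or.inl rfl) y s hyinc hus hvs ha)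
    · -- pairwise new-new
      refine List.Pairwise.cons ?_ (List.Pairwise.cons ?_ (List.Pairwise.cons ?_
        (List.Pairwise.cons ?_ (List.Pairwise.cons ?_ (List.Pairwise.cons ?_
        (List.Pairwise.cons ?_ (List.pairwise_singleton _ _)))))))
      · -- (w, g) vs the rest
        rintro qd hqd hadj h
        simp only [List.mem_cons, List.not_mem_nil, or_false] at hqd
        rcases hqd with h1 | h1 | h1 | h1 | h1 | h1 | h1
        all_goals subst h1
        all_goals dsimp only at hadj h
        · -- vs (v2, h2)
          apply hc2F
          rw [hF2]
          exact Finset.mem_union_right _ (Finset.mem_singleton.mpr h.symm)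
        · -- vs (u, g): c1 ∈ Fa
          apply hcaFa
          rw [hFa]
          refine Finset.mem_image.mpr ⟨g, Multigraph.mem_edgesAt.mpr hwg, ?_⟩
          rw [hφw]
          dsimp only
          rw [if_pos rfl]
          exact h
        · -- vs (v, h2): adjacency forces v2 = w
          have hv2w : v2 = w := by
            rcases hadj with hh | hh | hh | hh
            · exact absurd hh hwv
            · exact absurd hh hgh2
            · exfalso
              rw [hendsg, Sym2.eq_iff] at hh
              rcases hh with ⟨h1, -⟩ | ⟨h1, -⟩
              · exact hwu h1.symm
              · exact huv h1
            · rw [hendsh2, Sym2.eq_iff] at hh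
              rcases hh with ⟨h1, -⟩ | ⟨-, h2⟩
              · exact absurd h1.symm hwv
              · exact h2
          apply hcbFb
          rw [hFb]
          refine Finset.mem_image.mpr ⟨g, Multigraph.mem_edgesAt.mpr (by
            rw [hv2w]; exact hwg), ?_⟩
          rw [hφv2]
          dsimp only
          rw [if_neg hgh2, if_pos rfl]
          exact h
        · -- vs (u, f): exclusion
          apply hck2F
          rw [← h]
          simp
        · -- vs (v, e): refute adjacency
          exfalso
          rcases hadj with hh | hh | hh | hh
          · exact hwv hh
          · exact hge hh
          · rw [hendsg, Sym2.eq_iff] at hh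
            rcases hh with ⟨h1, -⟩ | ⟨h1, -⟩
            · exact hwu h1.symm
            · exact huv h1
          · rw [hendse, Sym2.eq_iff] at hh
            rcases hh with ⟨h1, -⟩ | ⟨h1, -⟩
            · exact hwu h1.symm
            · exact huv h1
        · -- vs (v, f): refute adjacency
          exfalso
          rcases hadj with hh | hh | hh | hh
          · exact hwv hh
          · exact hgf hh
          · rw [hendsg, Sym2.eq_iff] at hh
            rcases hh with ⟨h1, -⟩ | ⟨h1, -⟩
            · exact hwu h1.symm
            · exact huv h1
          · rw [hendsf, Sym2.eq_iff] at hh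
            rcases hh with ⟨h1, -⟩ | ⟨h1, -⟩
            · exact hwu h1.symm
            · exact huv h1
        · -- vs (u, e): exclusion via ck1 ∉ {c1}
          apply hck1c1
          rw [← h]
          simp
      · -- (v2, h2) vs the rest
        rintro qd hqd hadj h
        simp only [List.mem_cons, List.not_mem_nil, or_false] at hqd
        rcases hqd with h1 | h1 | h1 | h1 | h1 | h1
        all_goals subst h1
        all_goals dsimp only at hadj h
        · -- vs (u, g): adjacency forces w = v2
          have hwv2 : w = v2 := by
            rcases hadj with hh | hh | hh | hh
            · exact absurd hh hv2u
            · exact absurd hh.symm hgh2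
            · exfalso
              rw [hendsh2, Sym2.eq_iff] at hh
              rcases hh with ⟨h1, h2⟩ | ⟨h1, -⟩
              · exact hv2u h2
              · exact huv h1.symm
            · rw [hendsg, Sym2.eq_iff] at hh
              rcases hh with ⟨h1, h2⟩ | ⟨-, h2⟩
              · exact absurd h1.symm hv2u
              · exact h2
          apply hcaFa
          rw [hFa]
          refine Finset.mem_image.mpr ⟨h2, Multigraph.mem_edgesAt.mpr (by
            rw [hwv2]; exact hv2h2), ?_⟩
          rw [hφw]
          dsimp only
          rw [if_neg (Ne.symm hgh2), if_pos rfl]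
          exact h
        · -- vs (v, h2): c2 ∈ Fb
          apply hcbFb
          rw [hFb]
          refine Finset.mem_image.mpr ⟨h2, Multigraph.mem_edgesAt.mpr hv2h2, ?_⟩
          rw [hφv2]
          dsimp only
          rw [if_pos rfl]
          exact h
        · -- vs (u, f): refute adjacency
          exfalso
          rcases hadj with hh | hh | hh | hh
          · exact hv2u hh
          · exact hh2f hh
          · rw [hendsh2, Sym2.eq_iff] at hh
            rcases hh with ⟨h1, h2⟩ | ⟨h1, -⟩
            · exact hv2u h2
            · exact huv h1.symm
          · rw [hendsf, Sym2.eq_iff] at hh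
            rcases hh with ⟨h1, h2⟩ | ⟨-, h2⟩
            · exact huv h2.symm
            · exact hv2v h2.symm
        · -- vs (v, e): exclusion
          apply hck3F
          rw [← h]
          simp
        · -- vs (v, f): exclusion
          apply hck4F
          rw [← h]
          simp
        · -- vs (u, e): refute adjacency
          exfalso
          rcases hadj with hh | hh | hh | hh
          · exact hv2u hh
          · exact hh2e hh
          · rw [hendsh2, Sym2.eq_iff] at hh
            rcases hh with ⟨h1, h2⟩ | ⟨h1, -⟩
            · exact hv2u h2
            · exact huv h1.symm
          · rw [hendse, Sym2.eq_iff] at hh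
            rcases hh with ⟨h1, h2⟩ | ⟨-, h2⟩
            · exact huv h2.symm
            · exact hv2v h2.symm
      · -- (u, g) vs the rest
        rintro qd hqd hadj h
        simp only [List.mem_cons, List.not_mem_nil, or_false] at hqd
        rcases hqd with h1 | h1 | h1 | h1 | h1
        all_goals subst h1
        all_goals dsimp only at hadj h
        · -- vs (v, h2): refute adjacency
          exfalso
          rcases hadj with hh | hh | hh | hh
          · exact huv hh
          · exact hgh2 hh
          · rw [hendsg, Sym2.eq_iff] at hh
            rcases hh with ⟨-, h2⟩ | ⟨h1, -⟩
            · exact hwv h2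
            · exact huv h1
          · rw [hendsh2, Sym2.eq_iff] at hh
            rcases hh with ⟨h1, -⟩ | ⟨-, h2⟩
            · exact huv h1.symm
            · exact hv2u h2
        · -- vs (u, f): exclusion
          apply hck2F
          rw [← h]
          simp
        · -- vs (v, e): exclusion
          apply hck3F
          rw [← h]
          simp
        · -- vs (v, f): exclusion
          apply hck4F
          rw [← h]
          simp
        · -- vs (u, e): exclusion via ck1 ∉ {ca, cb}
          apply hck1ab
          rw [← h]
          simp
      · -- (v, h2) vs the rest
        rintro qd hqd hadj h
        simp only [List.mem_cons, List.not_mem_nil, or_false] at hqd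
        rcases hqd with h1 | h1 | h1 | h1
        all_goals subst h1
        all_goals dsimp only at hadj h
        · apply hck2F
          rw [← h]
          simp
        · apply hck3F
          rw [← h]
          simp
        · apply hck4F
          rw [← h]
          simp
        · apply hck1ab
          rw [← h]
          simp
      · -- (u, f) vs the rest
        rintro qd hqd hadj h
        simp only [List.mem_cons, List.not_mem_nil, or_false] at hqd
        rcases hqd with h1 | h1 | h1
        all_goals subst h1
        all_goals dsimp only at hadj h
        · apply hck3F
          rw [← h]
          simp
        · apply hck4F
          rw [← h]
          simp
        · apply hck1k
          rw [← h]
          simp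
      · -- (v, e) vs the rest
        rintro qd hqd hadj h
        simp only [List.mem_cons, List.not_mem_nil, or_false] at hqd
        rcases hqd with h1 | h1
        all_goals subst h1
        all_goals dsimp only at hadj h
        · apply hck4F
          rw [← h]
          simp
        · apply hck1k
          rw [← h]
          simp
      · -- (v, f) vs (u, e)
        rintro qd hqd hadj h
        simp only [List.mem_cons, List.not_mem_nil, or_false] at hqd
        subst hqd
        dsimp only at hadj h
        apply hck1k
        rw [← h]
        simp
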